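/- For the Finsler space with F = e^{−x1}(y2³ + e^{−x1 x3} y3 y1²)^{1/3} on {y1 ≠ 0, y2 = 0}, the Lie bracket of the nullity vector fields X = h₁ and Y = h₃ (where h_i is the horizontal frame of the Barthel connection with N^1_1 = −½(3+x3)y1, N^2_1 = −(3/4)y2, N^2_2 = −(3/4)y1, N^3_1 = −(3/4)y2³ e^{x1 x3}/y1², N^3_2 = (9/4)y2² e^{x1 x3}/y1, N^3_3 = −y3 x1) equals −(y1/2)∂/∂y1 + y3 ∂/∂y3, which is a vertical vector field. -/

import Mathlib

open scoped BigOperators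

/-- The phase space `ℝ³ × ℝ³` with coordinates `(x, y)`. -/
abbrev E : Type := (Fin 3 → ℝ) × (Fin 3 → ℝ)

/-- The Lie bracket of two vector fields on `E`. -/
noncomputable def lieB (X Y : E → E) (z : E) : E :=
  fderiv ℝ Y z (X z) - fderiv ℝ X z (Y z)

/-- The Barthel connection coefficients `N^i_j` of
`F = e^{−x1}(y2³ + e^{−x1x3} y3 y1²)^{1/3}`. -/
noncomputable def NN (x y : Fin 3 → ℝ) : Fin 3 → Fin 3 → ℝ := fun i j =>
  (!![-(1 / 2) * (3 + x 2) * y 0, 0, 0;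
      -(3 / 4) * y 1, -(3 / 4) * y 0, 0;
      -(3 / 4) * (y 1) ^ 3 * Real.exp ((x 0) * (x 2)) / (y 0) ^ 2,
        (9 / 4) * (y 1) ^ 2 * Real.exp ((x 0) * (x 2)) / (y 0),
        -(y 2) * (x 0)] : Matrix (Fin 3) (Fin 3) ℝ) i j

/-- The horizontal frame `h_i = ∂/∂x^i − N^j_i ∂/∂y^j` of the Barthel connection. -/
noncomputable def hh (i : Fin 3) : E → E := fun z =>
  (Pi.single i 1, fun j => -NN z.1 z.2 j i)

/-- Projection onto the `k`-th base coordinate. -/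
noncomputable def Px (k : Fin 3) : E →L[ℝ] ℝ :=
  (ContinuousLinearMap.proj k).comp (ContinuousLinearMap.fst ℝ (Fin 3 → ℝ) (Fin 3 → ℝ))

/-- Projection onto the `k`-th fiber coordinate. -/
noncomputable def Py (k : Fin 3) : E →L[ℝ] ℝ :=
  (ContinuousLinearMap.proj k).comp (ContinuousLinearMap.snd ℝ (Fin 3 → ℝ) (Fin 3 → ℝ))

lemma hPx (k : Fin 3) (z : E) : HasFDerivAt (fun w : E => w.1 k) (Px k) z :=
  (Px k).hasFDerivAt

lemma hPy (k : Fin 3) (z : E) : HasFDerivAt (fun w : E => w.2 k) (Py k) z :=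
  (Py k).hasFDerivAt

@[simp] lemma Px_apply (k : Fin 3) (w : E) : Px k w = w.1 k := rfl
@[simp] lemma Py_apply (k : Fin 3) (w : E) : Py k w = w.2 k := rfl

/-- on `{y1 ≠ 0, y2 = 0}`, the Lie bracket of the nullity vector fields
`X = h₁` and `Y = h₃` equals `−(y1/2)∂/∂y1 + y3 ∂/∂y3`, a vertical vector field. -/
theorem statement7 :
    ∀ z : E, z.2 0 ≠ 0 → z.2 1 = 0 →
      lieB (hh 0) (hh 2) z = (0, ![-(z.2 0) / 2, 0, z.2 2]) := by
  intro z hy0 hy1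
  -- derivative of hh 2
  have hY20 : HasFDerivAt (fun w : E => -NN w.1 w.2 0 2) (0 : E →L[ℝ] ℝ) z := by
    refine (hasFDerivAt_const (0:ℝ) z).congr_of_eventuallyEq (.of_forall fun w => ?_)
    simp [NN]
  have hY21 : HasFDerivAt (fun w : E => -NN w.1 w.2 1 2) (0 : E →L[ℝ] ℝ) z := by
    refine (hasFDerivAt_const (0:ℝ) z).congr_of_eventuallyEq (.of_forall fun w => ?_)
    simp [NN]
  have hY22 : HasFDerivAt (fun w : E => -NN w.1 w.2 2 2)
      (z.2 2 • Px 0 + z.1 0 • Py 2) z := by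
    refine ((hPy 2 z).mul (hPx 0 z)).congr_of_eventuallyEq (.of_forall fun w => ?_)
    simp [NN]
  set LY : E →L[ℝ] E :=
    (0 : E →L[ℝ] (Fin 3 → ℝ)).prod
      (ContinuousLinearMap.pi ![0, 0, z.2 2 • Px 0 + z.1 0 • Py 2]) with hLY
  have hY : HasFDerivAt (hh 2) LY z := by
    refine HasFDerivAt.prodMk (hasFDerivAt_const _ _) (hasFDerivAt_pi.2 ?_)
    intro j
    fin_cases j
    · exact hY20
    · exact hY21
    · exact hY22
  -- derivative of hh 0
  have hX0 : HasFDerivAt (fun w : E => -NN w.1 w.2 0 0)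
      ((1/2 * (3 + z.1 2)) • Py 0 + z.2 0 • ((1/2 : ℝ) • Px 2)) z := by
    refine ((((hPx 2 z).const_add 3).const_mul (1/2)).mul (hPy 0 z)).congr_of_eventuallyEq
      (.of_forall fun w => ?_)
    simp [NN]
  have hX1 : HasFDerivAt (fun w : E => -NN w.1 w.2 1 0) ((3/4 : ℝ) • Py 1) z := by
    refine ((hPy 1 z).const_mul (3/4)).congr_of_eventuallyEq (.of_forall fun w => ?_)
    simp [NN]
  have hX2 : HasFDerivAt (fun w : E => -NN w.1 w.2 2 0) (0 : E →L[ℝ] ℝ) z := by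
    have hB : DifferentiableAt ℝ (fun w : E => Real.exp (w.1 0 * w.1 2) * (w.2 0 ^ 2)⁻¹) z :=
      ((((hPx 0 z).mul (hPx 2 z)).exp).differentiableAt).mul
        (((hPy 0 z).differentiableAt.pow 2).inv (pow_ne_zero 2 hy0))
    have hA := (((hPy 1 z).mul (hPy 1 z)).mul (hPy 1 z)).const_mul (3/4 : ℝ)
    have h := hA.mul hB.hasFDerivAt
    have h2 := h.congr_of_eventuallyEq (.of_forall (fun w : E => by
      show -NN w.1 w.2 2 0 = _
      simp [NN]
      all_goals ring))
    refine h2.congr_fderiv ?_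
    simp [hy1]
  set LX : E →L[ℝ] E :=
    (0 : E →L[ℝ] (Fin 3 → ℝ)).prod
      (ContinuousLinearMap.pi
        ![(1/2 * (3 + z.1 2)) • Py 0 + z.2 0 • ((1/2 : ℝ) • Px 2),
          (3/4 : ℝ) • Py 1, 0]) with hLX
  have hX : HasFDerivAt (hh 0) LX z := by
    refine HasFDerivAt.prodMk (hasFDerivAt_const _ _) (hasFDerivAt_pi.2 ?_)
    intro j
    fin_cases j
    · exact hX0
    · exact hX1
    · exact hX2
  have key : lieB (hh 0) (hh 2) z = LY (hh 0 z) - LX (hh 2 z) := by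
    rw [lieB, hY.fderiv, hX.fderiv]
  rw [key]
  refine Prod.ext ?_ ?_
  · simp [hLY, hLX]
  · funext j
    fin_cases j <;>
      simp [hLY, hLX, hh, NN, Pi.single_apply, hy1, Matrix.vecHead, Matrix.vecTail,
        Function.comp] <;> ring
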